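/- Let V be a Euclidean space and u, v ∈ V nonzero vectors such that u ≠ -c·v for all c > 0. Then the intersection of open half-spaces H_u^int ∩ H_v^int is nonempty, where H_w^int = {x ∈ V : ⟨x,w⟩ < 0}. -/

import Mathlib

open Set

noncomputable section

def IsCone {V : Type*} [AddCommGroup V] [Module ℝ V] (C : Set V) : Prop :=
  (0 : V) ∈ C ∧ ∀ r : ℝ, 0 ≤ r → ∀ v ∈ C, r • v ∈ C

def IsConvexCone {V : Type*} [AddCommGroup V] [Module ℝ V] (C : Set V) : Prop :=
  IsCone C ∧ ∀ u ∈ C, ∀ v ∈ C, u + v ∈ C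

def IsMaxPointedCone {V : Type*} [AddCommGroup V] [Module ℝ V] (D : Set V) : Prop :=
  IsConvexCone D ∧ D ∩ (-D) = {0} ∧ D ∪ (-D) = Set.univ

def hatCone {V : Type*} [AddCommGroup V] [Module ℝ V] (X : Set V) : Set V :=
  {0} ∪ {v | ∃ r : ℝ, 0 ≤ r ∧ ∃ x ∈ X, v = r • x}

def sphereN (n : ℕ) : Set (EuclideanSpace ℝ (Fin (n + 1))) := Metric.sphere 0 1

def PhiPlus (n : ℕ) : Set (EuclideanSpace ℝ (Fin (n + 1))) :=
  {x | x ∈ sphereN n ∧ ∃ m : Fin (n + 1), 0 < x m ∧ ∀ i, m < i → x i = 0}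

def PhiMinus (n : ℕ) : Set (EuclideanSpace ℝ (Fin (n + 1))) := {x | -x ∈ PhiPlus n}

def Ln (n : ℕ) : Set (Set (EuclideanSpace ℝ (Fin (n + 1)))) :=
  {X | ∃ D, IsMaxPointedCone D ∧ X = D ∩ PhiPlus n}

theorem stmt5 {V : Type*} [NormedAddCommGroup V] [InnerProductSpace ℝ V]
    [FiniteDimensional ℝ V] (u v : V) (hu : u ≠ 0) (hv : v ≠ 0)
    (h : ∀ c : ℝ, 0 < c → u ≠ -(c • v)) :
    ({x : V | (inner ℝ x u : ℝ) < 0} ∩ {x : V | (inner ℝ x v : ℝ) < 0}).Nonempty := by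
  have key : (inner ℝ u (-v) : ℝ) < ‖u‖ * ‖v‖ := by
    rw [← norm_neg v, inner_lt_norm_mul_iff_real, norm_neg]
    intro heq
    have hc : (0:ℝ) < ‖u‖ * ‖v‖⁻¹ :=
      mul_pos (norm_pos_iff.2 hu) (inv_pos.2 (norm_pos_iff.2 hv))
    apply h _ hc
    have huv : u = (‖v‖⁻¹ * ‖u‖) • (-v) := by
      rw [mul_smul, ← heq, smul_smul, inv_mul_cancel₀ (norm_ne_zero_iff.2 hv), one_smul]
    calc u = (‖v‖⁻¹ * ‖u‖) • (-v) := huv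
      _ = -((‖u‖ * ‖v‖⁻¹) • v) := by rw [smul_neg, mul_comm]
  have key' : -(‖u‖ * ‖v‖) < (inner ℝ u v : ℝ) := by
    rw [inner_neg_right] at key; linarith
  refine ⟨-(‖v‖ • u + ‖u‖ • v), ?_, ?_⟩
  · simp only [Set.mem_setOf_eq, inner_neg_left, inner_add_left, real_inner_smul_left,
      real_inner_self_eq_norm_sq]
    have hun : (0:ℝ) < ‖u‖ := norm_pos_iff.2 hu
    have hvn : (0:ℝ) < ‖v‖ := norm_pos_iff.2 hv
    have : (inner ℝ v u : ℝ) = (inner ℝ u v : ℝ) := real_inner_comm u v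
    nlinarith [sq_nonneg (‖u‖)]
  · simp only [Set.mem_setOf_eq, inner_neg_left, inner_add_left, real_inner_smul_left,
      real_inner_self_eq_norm_sq]
    have hun : (0:ℝ) < ‖u‖ := norm_pos_iff.2 hu
    have hvn : (0:ℝ) < ‖v‖ := norm_pos_iff.2 hv
    nlinarith [sq_nonneg (‖v‖)]
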